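/- arXiv:2109.02863 — 5 statements merged into one kernel-verified Lean document; each statement's English description precedes it below -/
import Mathlib

section
/- Let A = V + N where V = WH is an r-separable nonnegative d×n matrix with H = [I, H̄]Π for a permutation matrix Π, all columns of V, W, H have unit L1 norm, and ||N||_1 ≤ ε. Define X_0 = Π^{-1} [[I, H̄],[0, 0]] Π ∈ ℝ^{n×n}. Then V X_0 = V and ||A − A X_0||_1 ≤ 2ε. -/
noncomputable section
open Matrix
open scoped Classical

/-- Entrywise L1 norm of a vector. -/
def l1 {α : Type*} [Fintype α] (v : α → ℝ) : ℝ := ∑ i, |v i|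

/-- Induced L1 norm of a matrix (maximum column sum of absolute values). -/
def ml1 {α β : Type*} [Fintype α] [Fintype β] (M : Matrix α β ℝ) : ℝ :=
  sSup (Set.range fun j => ∑ i, |M i j|)

/-- Feasible set of problem P(A,r). -/
def Feas {ι : Type*} [Fintype ι] [DecidableEq ι] (X : Matrix ι ι ℝ) (r : ℕ) : Prop :=
  Matrix.trace X = (r : ℝ) ∧ (∀ i, X i i ≤ 1) ∧ (∀ i j, 0 ≤ X i j) ∧
    (∀ i j, X i j ≤ X i i)

/-- κ(W) = min over j of min over nonnegative z (supported off j) of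
    ‖w_j − W(:,R∖{j}) z‖₁. -/
def kappa {d r : ℕ} (W : Matrix (Fin d) (Fin r) ℝ) : ℝ :=
  sInf {c | ∃ (j : Fin r) (z : Fin r → ℝ), (∀ k, 0 ≤ z k) ∧ z j = 0 ∧
    c = l1 (fun i => W i j - ∑ k, W i k * z k)}

/-- ω(W) = min over distinct pairs of ‖w_{j₁} − w_{j₂}‖₁. -/
def omegaW {d r : ℕ} (W : Matrix (Fin d) (Fin r) ℝ) : ℝ :=
  sInf {c | ∃ j₁ j₂ : Fin r, j₁ ≠ j₂ ∧ c = l1 (fun i => W i j₁ - W i j₂)}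

/-- β = maximum entry of H̄. -/
def betaH {r m : ℕ} (Hb : Matrix (Fin r) (Fin m) ℝ) : ℝ :=
  sSup (Set.range fun p : Fin r × Fin m => Hb p.1 p.2)

/-- With X₀ = Π⁻¹ [[I,H̄],[0,0]] Π, one has V X₀ = V and ‖A − A X₀‖₁ ≤ 2ε. -/
theorem VX0_eq_and_noise_bound
    {d r m : ℕ} (W : Matrix (Fin d) (Fin r) ℝ) (Hbar : Matrix (Fin r) (Fin m) ℝ)
    (σ : Equiv.Perm (Fin r ⊕ Fin m))
    (N A V : Matrix (Fin d) (Fin r ⊕ Fin m) ℝ)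
    (H : Matrix (Fin r) (Fin r ⊕ Fin m) ℝ) (ε : ℝ)
    (hW : ∀ i j, 0 ≤ W i j) (hHbar : ∀ i j, 0 ≤ Hbar i j)
    (hH : H = fun j u => Matrix.fromCols (1 : Matrix (Fin r) (Fin r) ℝ) Hbar j (σ u))
    (hV : V = W * H) (hA : A = V + N)
    (hVcol : ∀ u, l1 (fun i => V i u) = 1)
    (hWcol : ∀ j, l1 (fun i => W i j) = 1)
    (hHcol : ∀ u, l1 (fun j => H j u) = 1)
    (hε0 : 0 ≤ ε) (hε1 : ε < 1) (hN : ml1 N ≤ ε)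
    (X0 : Matrix (Fin r ⊕ Fin m) (Fin r ⊕ Fin m) ℝ)
    (hX0 : X0 = fun u v =>
      Matrix.fromBlocks (1 : Matrix (Fin r) (Fin r) ℝ) Hbar
        (0 : Matrix (Fin m) (Fin r) ℝ) (0 : Matrix (Fin m) (Fin m) ℝ) (σ u) (σ v)) :
    V * X0 = V ∧ ml1 (A - A * X0) ≤ 2 * ε := by
  have hHX0 : H * X0 = H := by
    ext j v
    rw [Matrix.mul_apply, hH, hX0]
    simp only
    rw [Equiv.sum_comp σ (fun w => Matrix.fromCols (1 : Matrix (Fin r) (Fin r) ℝ) Hbar j w *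
      Matrix.fromBlocks (1 : Matrix (Fin r) (Fin r) ℝ) Hbar (0 : Matrix (Fin m) (Fin r) ℝ) (0 : Matrix (Fin m) (Fin m) ℝ) w (σ v))]
    rcases h : σ v with c | k
    · rw [Fintype.sum_sum_type]
      simp [Matrix.fromCols, Matrix.one_apply, Finset.sum_ite_eq]
    · rw [Fintype.sum_sum_type]
      simp [Matrix.fromCols, Matrix.one_apply, Finset.sum_ite_eq]
  have hVX0 : V * X0 = V := by rw [hV, Matrix.mul_assoc, hHX0]
  refine ⟨hVX0, ?_⟩
  -- column sums of X0
  have hX0nn : ∀ u v, 0 ≤ X0 u v := by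
    intro u v
    rw [hX0]
    rcases hu : σ u with a | b <;> rcases hv : σ v with c | k <;>
      simp [hu, hv, Matrix.one_apply, hHbar] <;> split <;> norm_num
  have hX0col : ∀ v, ∑ u, X0 u v ≤ 1 := by
    intro v
    have : ∑ u, X0 u v = ∑ w, Matrix.fromBlocks (1 : Matrix (Fin r) (Fin r) ℝ) Hbar (0 : Matrix (Fin m) (Fin r) ℝ) (0 : Matrix (Fin m) (Fin m) ℝ) w (σ v) := by
      rw [hX0]
      exact Equiv.sum_comp σ (fun w => Matrix.fromBlocks (1 : Matrix (Fin r) (Fin r) ℝ) Hbar (0 : Matrix (Fin m) (Fin r) ℝ) (0 : Matrix (Fin m) (Fin m) ℝ) w (σ v))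
    rw [this, Fintype.sum_sum_type]
    rcases h : σ v with c | k
    · simp [Matrix.one_apply, Finset.sum_ite_eq]
    · have hc := hHcol (σ.symm (Sum.inr k))
      rw [hH] at hc
      simp only [l1, Equiv.apply_symm_apply] at hc
      have : ∑ j : Fin r, |Hbar j k| = 1 := by
        simpa [Matrix.fromCols] using hc
      have habs : ∀ j : Fin r, |Hbar j k| = Hbar j k := fun j => abs_of_nonneg (hHbar j k)
      simp only [habs] at this
      simp [this]
  -- column sums of N bounded by ε
  have hNcol : ∀ u, ∑ i, |N i u| ≤ ε := by
    intro u
    refine le_trans ?_ hN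
    exact le_csSup (Set.Finite.bddAbove (Set.finite_range _)) ⟨u, rfl⟩
  have hdiff : A - A * X0 = N - N * X0 := by
    rw [hA, Matrix.add_mul, hVX0]
    abel
  rw [hdiff]
  apply Real.sSup_le
  · rintro x ⟨v, rfl⟩
    simp only
    calc ∑ i, |(N - N * X0) i v|
        ≤ ∑ i, (|N i v| + |(N * X0) i v|) := by
          apply Finset.sum_le_sum
          intro i _
          simp only [Matrix.sub_apply]
          exact abs_sub _ _
      _ = ∑ i, |N i v| + ∑ i, |(N * X0) i v| := Finset.sum_add_distrib
      _ ≤ ε + ε := by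
          refine add_le_add (hNcol v) ?_
          calc ∑ i, |(N * X0) i v|
              ≤ ∑ i, ∑ u, |N i u| * X0 u v := by
                apply Finset.sum_le_sum
                intro i _
                rw [Matrix.mul_apply]
                refine le_trans (Finset.abs_sum_le_sum_abs _ _) ?_
                apply Finset.sum_le_sum
                intro u _
                rw [abs_mul, abs_of_nonneg (hX0nn u v)]
            _ = ∑ u, (∑ i, |N i u|) * X0 u v := by
                rw [Finset.sum_comm]
                simp [Finset.sum_mul]
            _ ≤ ∑ u, ε * X0 u v := by
                apply Finset.sum_le_sum
                intro u _
                exact mul_le_mul_of_nonneg_right (hNcol u) (hX0nn u v)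
            _ = ε * ∑ u, X0 u v := by rw [Finset.mul_sum]
            _ ≤ ε * 1 := mul_le_mul_of_nonneg_left (hX0col v) hε0
            _ = ε := mul_one ε
      _ = 2 * ε := by ring
  · positivity
end
end

section
/- Under Assumption 1 (A = V + N with V r-separable, all columns of V, W, H having unit L1 norm, and ||N||_1 ≤ ε < 1), the optimal value θ of the optimization problem P(A,r): minimize ||A − AX||_1 subject to tr(X) = r, X(i,i) ≤ 1 for all i, 0 ≤ X(i,j) ≤ X(i,i) for all i,j, satisfies θ ≤ 2ε. -/
noncomputable section
open Matrix
open scoped Classical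

/-- Each column sum is at most the induced L1 norm. -/
lemma col_le_ml1 {α β : Type*} [Fintype α] [Fintype β] (M : Matrix α β ℝ) (j : β) :
    ∑ i, |M i j| ≤ ml1 M :=
  le_csSup (Set.finite_range _).bddAbove ⟨j, rfl⟩

lemma ml1_nonneg {α β : Type*} [Fintype α] [Fintype β] (M : Matrix α β ℝ) :
    0 ≤ ml1 M := by
  rcases isEmpty_or_nonempty β with h | h
  · simp [ml1, Set.range_eq_empty, Real.sSup_empty]
  · obtain ⟨j⟩ := h
    exact le_trans (Finset.sum_nonneg fun i _ => abs_nonneg _) (col_le_ml1 M j)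

/-- The optimal value θ of problem P(A,r) satisfies θ ≤ 2ε. -/
theorem optimal_value_le_two_eps
    {d r m : ℕ} (W : Matrix (Fin d) (Fin r) ℝ) (Hbar : Matrix (Fin r) (Fin m) ℝ)
    (σ : Equiv.Perm (Fin r ⊕ Fin m))
    (N A V : Matrix (Fin d) (Fin r ⊕ Fin m) ℝ)
    (H : Matrix (Fin r) (Fin r ⊕ Fin m) ℝ) (ε : ℝ)
    (hW : ∀ i j, 0 ≤ W i j) (hHbar : ∀ i j, 0 ≤ Hbar i j)
    (hH : H = fun j u => Matrix.fromCols (1 : Matrix (Fin r) (Fin r) ℝ) Hbar j (σ u))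
    (hV : V = W * H) (hA : A = V + N)
    (hVcol : ∀ u, l1 (fun i => V i u) = 1)
    (hWcol : ∀ j, l1 (fun i => W i j) = 1)
    (hHcol : ∀ u, l1 (fun j => H j u) = 1)
    (hε0 : 0 ≤ ε) (hε1 : ε < 1) (hN : ml1 N ≤ ε)
    (θ : ℝ)
    (hθ : θ = sInf {c | ∃ X : Matrix (Fin r ⊕ Fin m) (Fin r ⊕ Fin m) ℝ,
      Feas X r ∧ c = ml1 (A - A * X)}) :
    θ ≤ 2 * ε := by
  set π : Fin r → Fin r ⊕ Fin m := fun k => σ.symm (Sum.inl k) with hπ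
  have hπdef : ∀ k, π k = σ.symm (Sum.inl k) := fun k => rfl
  have hHapp : ∀ j u, H j u = Matrix.fromCols (1 : Matrix (Fin r) (Fin r) ℝ) Hbar j (σ u) := by
    intro j u; rw [hH]
  have hHπ : ∀ j k, H j (π k) = (1 : Matrix (Fin r) (Fin r) ℝ) j k := by
    intro j k
    rw [hHapp, hπdef]
    simp [Matrix.fromCols]
  have hHnn : ∀ j u, 0 ≤ H j u := by
    intro j u
    rw [hHapp]
    cases hsu : σ u with
    | inl k => simp [Matrix.fromCols, Matrix.one_apply]; positivity
    | inr k => simpa [Matrix.fromCols] using hHbar j k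
  have hHsum : ∀ u, ∑ j, H j u = 1 := by
    intro u
    have := hHcol u
    rw [l1] at this
    rw [← this]
    exact Finset.sum_congr rfl fun j _ => (abs_of_nonneg (hHnn j u)).symm
  have hHle1 : ∀ j u, H j u ≤ 1 := by
    intro j u
    rw [← hHsum u]
    exact Finset.single_le_sum (fun k _ => hHnn k u) (Finset.mem_univ j)
  have hVπ : ∀ i k, V i (π k) = W i k := by
    intro i k
    rw [hV]
    simp only [Matrix.mul_apply]
    rw [Finset.sum_congr rfl fun j _ => by rw [hHπ]]
    simp [Matrix.one_apply]
  set X₀ : Matrix (Fin r ⊕ Fin m) (Fin r ⊕ Fin m) ℝ :=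
    fun u v => Sum.elim (fun k => H k v) (fun _ => 0) (σ u) with hX₀
  have hX₀app : ∀ u v, X₀ u v = Sum.elim (fun k => H k v) (fun _ => 0) (σ u) :=
    fun u v => rfl
  have hX₀pure : ∀ k v, X₀ (π k) v = H k v := by
    intro k v
    rw [hX₀app, hπdef, Equiv.apply_symm_apply, Sum.elim_inl]
  have hX₀nn : ∀ u v, 0 ≤ X₀ u v := by
    intro u v
    rw [hX₀app]
    cases hsu : σ u with
    | inl k => exact hHnn k v
    | inr k => exact le_refl (0:ℝ)
  have hfeas : Feas X₀ r := by
    refine ⟨?_, ?_, hX₀nn, ?_⟩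
    · have : Matrix.trace X₀ = ∑ u, X₀ u u := rfl
      rw [this, ← Equiv.sum_comp σ.symm (fun u => X₀ u u), Fintype.sum_sum_type]
      have h1 : ∀ k : Fin r, X₀ (σ.symm (Sum.inl k)) (σ.symm (Sum.inl k)) = 1 := by
        intro k
        rw [hX₀app, Equiv.apply_symm_apply, Sum.elim_inl, ← hπdef, hHπ]
        simp [Matrix.one_apply]
      have h2 : ∀ k : Fin m, X₀ (σ.symm (Sum.inr k)) (σ.symm (Sum.inr k)) = 0 := by
        intro k
        rw [hX₀app, Equiv.apply_symm_apply, Sum.elim_inr]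
      simp only [h1, h2]
      simp
    · intro u
      rw [hX₀app]
      cases hsu : σ u with
      | inl k => exact hHle1 k u
      | inr k => exact zero_le_one
    · intro u v
      rw [hX₀app u v, hX₀app u u]
      cases hsu : σ u with
      | inl k =>
        simp only [Sum.elim_inl]
        have hu : π k = u := by rw [hπdef, ← hsu, Equiv.symm_apply_apply]
        calc H k v ≤ 1 := hHle1 k v
          _ = H k u := by rw [← hu, hHπ]; simp [Matrix.one_apply]
      | inr k => exact le_refl (0:ℝ)
  have hres : ∀ i v, (A - A * X₀) i v = N i v - ∑ k, N i (π k) * H k v := by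
    intro i v
    have hAX : (A * X₀) i v = ∑ k, A i (π k) * H k v := by
      rw [Matrix.mul_apply, ← Equiv.sum_comp σ.symm (fun u => A i u * X₀ u v),
        Fintype.sum_sum_type]
      have h2 : ∀ k : Fin m, A i (σ.symm (Sum.inr k)) * X₀ (σ.symm (Sum.inr k)) v = 0 := by
        intro k
        rw [hX₀app, Equiv.apply_symm_apply, Sum.elim_inr, mul_zero]
      simp only [h2, Finset.sum_const_zero, add_zero]
      refine Finset.sum_congr rfl fun k _ => ?_
      rw [hX₀app, Equiv.apply_symm_apply, Sum.elim_inl, hπdef]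
    have hVcolv : V i v = ∑ k, V i (π k) * H k v := by
      conv_lhs => rw [hV, Matrix.mul_apply]
      refine Finset.sum_congr rfl fun k _ => ?_
      rw [hVπ]
    have hsplit : ∑ k, A i (π k) * H k v
        = V i v + ∑ k, N i (π k) * H k v := by
      rw [hVcolv, ← Finset.sum_add_distrib]
      refine Finset.sum_congr rfl fun k _ => ?_
      have : A i (π k) = V i (π k) + N i (π k) := by rw [hA]; rfl
      rw [this]; ring
    have hstep : (A - A * X₀) i v = A i v - (A * X₀) i v := rfl
    have hAv : A i v = V i v + N i v := by rw [hA]; rfl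
    rw [hstep, hAX, hsplit, hAv]
    ring
  have hNcol : ∀ u, ∑ i, |N i u| ≤ ε := fun u => le_trans (col_le_ml1 N u) hN
  have hbound : ml1 (A - A * X₀) ≤ 2 * ε := by
    rw [ml1]
    apply Real.sSup_le
    · rintro c ⟨v, rfl⟩
      simp only
      calc ∑ i, |(A - A * X₀) i v|
          = ∑ i, |N i v - ∑ k, N i (π k) * H k v| := by
            refine Finset.sum_congr rfl fun i _ => ?_
            rw [hres]
        _ ≤ ∑ i, (|N i v| + ∑ k, |N i (π k)| * H k v) := by
            refine Finset.sum_le_sum fun i _ => ?_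
            refine le_trans (abs_sub _ _) (add_le_add (le_refl _) ?_)
            refine le_trans (Finset.abs_sum_le_sum_abs _ _) ?_
            refine Finset.sum_le_sum fun k _ => ?_
            rw [abs_mul, abs_of_nonneg (hHnn k v)]
        _ = (∑ i, |N i v|) + ∑ k, (∑ i, |N i (π k)|) * H k v := by
            rw [Finset.sum_add_distrib]
            congr 1
            rw [Finset.sum_comm]
            refine Finset.sum_congr rfl fun k _ => ?_
            rw [Finset.sum_mul]
        _ ≤ ε + ∑ k, ε * H k v := by
            refine add_le_add (hNcol v) (Finset.sum_le_sum fun k _ => ?_)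
            exact mul_le_mul_of_nonneg_right (hNcol (π k)) (hHnn k v)
        _ = ε + ε * ∑ k, H k v := by rw [Finset.mul_sum]
        _ = 2 * ε := by rw [hHsum v]; ring
    · positivity
  rw [hθ]
  refine le_trans (csInf_le ?_ ⟨X₀, hfeas, rfl⟩) hbound
  refine ⟨0, ?_⟩
  rintro c ⟨X, _, rfl⟩
  exact ml1_nonneg _
end
end

section
/- Under Assumption 1 with 0 ≤ ε < 1, any optimal solution X_opt of problem P(A,r) satisfies, for every column index i, ||X_opt(:,i)||_1 ≤ 1 + 4ε/(1−ε). -/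
noncomputable section
open Matrix
open scoped Classical

lemma ml1_le {α β : Type*} [Fintype α] [Fintype β] (M : Matrix α β ℝ) {c : ℝ}
    (h : ∀ j, ∑ i, |M i j| ≤ c) (hc : 0 ≤ c) : ml1 M ≤ c := by
  apply Real.sSup_le _ hc
  rintro x ⟨j, rfl⟩; exact h j


/-- Every column of an optimal solution of P(A,r) has L1 norm at most 1 + 4ε/(1−ε). -/
theorem opt_column_norm_bound
    {d r m : ℕ} (W : Matrix (Fin d) (Fin r) ℝ) (Hbar : Matrix (Fin r) (Fin m) ℝ)
    (σ : Equiv.Perm (Fin r ⊕ Fin m))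
    (N A V : Matrix (Fin d) (Fin r ⊕ Fin m) ℝ)
    (H : Matrix (Fin r) (Fin r ⊕ Fin m) ℝ) (ε : ℝ)
    (hW : ∀ i j, 0 ≤ W i j) (hHbar : ∀ i j, 0 ≤ Hbar i j)
    (hH : H = fun j u => Matrix.fromCols (1 : Matrix (Fin r) (Fin r) ℝ) Hbar j (σ u))
    (hV : V = W * H) (hA : A = V + N)
    (hVcol : ∀ u, l1 (fun i => V i u) = 1)
    (hWcol : ∀ j, l1 (fun i => W i j) = 1)
    (hHcol : ∀ u, l1 (fun j => H j u) = 1)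
    (hε0 : 0 ≤ ε) (hε1 : ε < 1) (hN : ml1 N ≤ ε)
    (Xopt : Matrix (Fin r ⊕ Fin m) (Fin r ⊕ Fin m) ℝ)
    (hfeas : Feas Xopt r)
    (hopt : ∀ X : Matrix (Fin r ⊕ Fin m) (Fin r ⊕ Fin m) ℝ,
      Feas X r → ml1 (A - A * Xopt) ≤ ml1 (A - A * X)) :
    ∀ i, l1 (fun u => Xopt u i) ≤ 1 + 4 * ε / (1 - ε) := by
  -- nonnegativity of H
  have hHnn : ∀ j u, 0 ≤ H j u := by
    intro j u
    rw [hH]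
    cases hσ : σ u with
    | inl k =>
      simp only [hσ, Matrix.fromCols_apply_inl, Matrix.one_apply]
      split <;> norm_num
    | inr k =>
      simp only [hσ, Matrix.fromCols_apply_inr]
      exact hHbar j k
  have hHcolsum : ∀ u, ∑ j, H j u = 1 := by
    intro u
    have := hVcol
    have h := hHcol u
    rw [l1] at h
    rw [← h]
    exact Finset.sum_congr rfl fun j _ => (abs_of_nonneg (hHnn j u)).symm
  have hHle1 : ∀ j u, H j u ≤ 1 := by
    intro j u
    have h := hHcol u
    rw [l1] at h
    calc H j u ≤ |H j u| := le_abs_self _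
      _ ≤ ∑ j', |H j' u| :=
          Finset.single_le_sum (fun j' _ => abs_nonneg (H j' u)) (Finset.mem_univ j)
      _ = 1 := h
  -- key identity values of H at σ.symm (inl k)
  have hHdiag : ∀ k k' : Fin r, H k (σ.symm (Sum.inl k')) = if k = k' then 1 else 0 := by
    intro k k'
    rw [hH]
    simp [Matrix.one_apply]
  -- column sums of N
  have hNcol : ∀ u, |∑ j, N j u| ≤ ε := by
    intro u
    calc |∑ j, N j u| ≤ ∑ j, |N j u| := Finset.abs_sum_le_sum_abs _ _
      _ ≤ ml1 N := col_le_ml1 N u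
      _ ≤ ε := hN
  -- column sums of A
  have hVnn : ∀ i u, 0 ≤ V i u := by
    intro i u
    rw [hV, Matrix.mul_apply]
    exact Finset.sum_nonneg fun k _ => mul_nonneg (hW i k) (hHnn k u)
  have hVsum : ∀ u, ∑ i, V i u = 1 := by
    intro u
    have h := hVcol u
    rw [l1] at h
    rw [← h]
    exact Finset.sum_congr rfl fun i _ => (abs_of_nonneg (hVnn i u)).symm
  have hAsum : ∀ u, ∑ i, A i u = 1 + ∑ j, N j u := by
    intro u
    simp only [hA, Matrix.add_apply, Finset.sum_add_distrib, hVsum]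
  -- the comparison feasible point X
  set X : Matrix (Fin r ⊕ Fin m) (Fin r ⊕ Fin m) ℝ :=
    fun u v => Sum.elim (fun k => H k v) (fun _ => (0:ℝ)) (σ u) with hXdef
  have hXapp : ∀ (w : Fin r ⊕ Fin m) v,
      X (σ.symm w) v = Sum.elim (fun k => H k v) (fun _ => (0:ℝ)) w := by
    intro w v; simp [hXdef]
  have hXcolsum : ∀ v, ∑ u, X u v = 1 := by
    intro v
    rw [← Equiv.sum_comp σ.symm (fun u => X u v)]
    simp only [hXapp]
    rw [Fintype.sum_sum_type]
    simp [hHcolsum v]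
  have hXfeas : Feas X r := by
    refine ⟨?_, ?_, ?_, ?_⟩
    · have : ∑ u, X u u = ∑ w, X (σ.symm w) (σ.symm w) :=
        (Equiv.sum_comp σ.symm (fun u => X u u)).symm
      rw [Matrix.trace]
      simp only [Matrix.diag]
      rw [this]
      simp only [hXapp]
      rw [Fintype.sum_sum_type]
      simp [hHdiag]
    · intro u
      rcases hσ : σ u with k | k
      · simp only [hXdef, hσ, Sum.elim_inl]; exact hHle1 k u
      · simp only [hXdef, hσ, Sum.elim_inr]; norm_num
    · intro u v
      rcases hσ : σ u with k | k
      · simp only [hXdef, hσ, Sum.elim_inl]; exact hHnn k v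
      · simp only [hXdef, hσ, Sum.elim_inr]; exact le_refl 0
    · intro u v
      rcases hσ : σ u with k | k
      · simp only [hXdef, hσ, Sum.elim_inl]
        calc H k v ≤ 1 := hHle1 k v
          _ = H k u := by
            have : u = σ.symm (Sum.inl k) := by
              apply_fun σ; simpa using hσ
            rw [this, hHdiag]; simp
      · simp only [hXdef, hσ, Sum.elim_inr]; exact le_refl 0
  -- M * X for any matrix M
  have hmulX : ∀ (M : Matrix (Fin d) (Fin r ⊕ Fin m) ℝ) j v,
      (M * X) j v = ∑ k, M j (σ.symm (Sum.inl k)) * H k v := by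
    intro M j v
    rw [Matrix.mul_apply]
    rw [← Equiv.sum_comp σ.symm (fun u => M j u * X u v)]
    simp only [hXapp]
    rw [Fintype.sum_sum_type]
    simp
  -- V * X = V
  have hVX : V * X = V := by
    ext j v
    rw [hmulX]
    have hVs : ∀ k : Fin r, V j (σ.symm (Sum.inl k)) = W j k := by
      intro k
      rw [hV, Matrix.mul_apply]
      simp [hHdiag, Finset.sum_ite_eq', Finset.mem_univ]
    simp only [hVs]
    rw [hV, Matrix.mul_apply]
  -- objective at X is ≤ 2ε
  have hobjX : ml1 (A - A * X) ≤ 2 * ε := by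
    have hAX : A - A * X = N - N * X := by
      rw [hA, Matrix.add_mul, hVX]
      abel
    rw [hAX]
    apply ml1_le _ _ (by linarith)
    intro v
    have h1 : ∀ j, |(N - N * X) j v| ≤ |N j v| + ∑ u, |N j u| * X u v := by
      intro j
      rw [Matrix.sub_apply]
      calc |N j v - (N * X) j v| ≤ |N j v| + |(N * X) j v| := abs_sub _ _
        _ ≤ |N j v| + ∑ u, |N j u| * X u v := by
            gcongr
            rw [Matrix.mul_apply]
            calc |∑ u, N j u * X u v| ≤ ∑ u, |N j u * X u v| := Finset.abs_sum_le_sum_abs _ _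
              _ = ∑ u, |N j u| * X u v := by
                  refine Finset.sum_congr rfl fun u _ => ?_
                  rw [abs_mul, abs_of_nonneg (hXfeas.2.2.1 u v)]
    calc ∑ j, |(N - N * X) j v| ≤ ∑ j, (|N j v| + ∑ u, |N j u| * X u v) :=
          Finset.sum_le_sum fun j _ => h1 j
      _ = (∑ j, |N j v|) + ∑ u, (∑ j, |N j u|) * X u v := by
          rw [Finset.sum_add_distrib, Finset.sum_comm]
          simp [Finset.sum_mul]
      _ ≤ ε + ∑ u, ε * X u v := by
          refine add_le_add (le_trans (col_le_ml1 N v) hN)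
            (Finset.sum_le_sum fun u _ => ?_)
          exact mul_le_mul_of_nonneg_right
            (le_trans (col_le_ml1 N u) hN) (hXfeas.2.2.1 u v)
      _ = ε + ε * ∑ u, X u v := by rw [Finset.mul_sum]
      _ = 2 * ε := by rw [hXcolsum v]; ring
  have hθ : ml1 (A - A * Xopt) ≤ 2 * ε := le_trans (hopt X hXfeas) hobjX
  -- main argument
  intro i
  have hXnn := hfeas.2.2.1
  set s : ℝ := ∑ u, Xopt u i with hs
  have hl1 : l1 (fun u => Xopt u i) = s := by
    rw [l1]
    exact Finset.sum_congr rfl fun u _ => abs_of_nonneg (hXnn u i)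
  rw [hl1]
  have hsnn : 0 ≤ s := Finset.sum_nonneg fun u _ => hXnn u i
  -- bound on |∑ b| where b is column i of A - A*Xopt
  have hb : |∑ j, (A - A * Xopt) j i| ≤ 2 * ε := by
    calc |∑ j, (A - A * Xopt) j i| ≤ ∑ j, |(A - A * Xopt) j i| := Finset.abs_sum_le_sum_abs _ _
      _ ≤ ml1 (A - A * Xopt) := col_le_ml1 _ i
      _ ≤ 2 * ε := hθ
  -- compute ∑ b
  have hsum : ∑ j, (A - A * Xopt) j i
      = 1 + (∑ j, N j i) - s - ∑ u, (∑ j, N j u) * Xopt u i := by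
    simp only [Matrix.sub_apply, Finset.sum_sub_distrib, Matrix.mul_apply]
    rw [hAsum i, Finset.sum_comm]
    have : ∀ u, ∑ j, A j u * Xopt u i = (1 + ∑ j, N j u) * Xopt u i := by
      intro u
      rw [← Finset.sum_mul, hAsum u]
    simp only [this]
    simp only [add_mul, one_mul, Finset.sum_add_distrib]
    rw [hs]
    ring
  -- bound on the cross term
  have hT : |∑ u, (∑ j, N j u) * Xopt u i| ≤ ε * s := by
    calc |∑ u, (∑ j, N j u) * Xopt u i| ≤ ∑ u, |(∑ j, N j u) * Xopt u i| :=
          Finset.abs_sum_le_sum_abs _ _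
      _ ≤ ∑ u, ε * Xopt u i := by
          refine Finset.sum_le_sum fun u _ => ?_
          rw [abs_mul, abs_of_nonneg (hXnn u i)]
          exact mul_le_mul_of_nonneg_right (hNcol u) (hXnn u i)
      _ = ε * s := by rw [hs, Finset.mul_sum]
  have hNi := hNcol i
  have hden : 0 < 1 - ε := by linarith
  have hkey : s * (1 - ε) ≤ 1 + 3 * ε := by
    have h1 := abs_le.1 hb
    have h2 := abs_le.1 hT
    have h3 := abs_le.1 hNi
    nlinarith [hsum]
  have heq : 1 + 4 * ε / (1 - ε) = (1 + 3 * ε) / (1 - ε) := by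
    field_simp
    ring
  rw [heq, le_div_iff₀ hden]
  linarith
end
end

section
/- Under Assumption 1, suppose μ satisfies ε ≤ μ, and let T_j = {u : ||a_u − w_j||_1 ≤ 2μ} be the j-th anchor. Then for every j ∈ R, max over u not in T_j of H(j,u) < 1 − μ/2. -/
noncomputable section
open Matrix
open scoped Classical

/-- For u outside the anchor T_j (with parameter μ ≥ ε), H(j,u) < 1 − μ/2. -/
theorem H_outside_anchor_bound
    {d r m : ℕ} (W : Matrix (Fin d) (Fin r) ℝ) (Hbar : Matrix (Fin r) (Fin m) ℝ)
    (σ : Equiv.Perm (Fin r ⊕ Fin m))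
    (N A V : Matrix (Fin d) (Fin r ⊕ Fin m) ℝ)
    (H : Matrix (Fin r) (Fin r ⊕ Fin m) ℝ) (ε : ℝ)
    (hW : ∀ i j, 0 ≤ W i j) (hHbar : ∀ i j, 0 ≤ Hbar i j)
    (hH : H = fun j u => Matrix.fromCols (1 : Matrix (Fin r) (Fin r) ℝ) Hbar j (σ u))
    (hV : V = W * H) (hA : A = V + N)
    (hVcol : ∀ u, l1 (fun i => V i u) = 1)
    (hWcol : ∀ j, l1 (fun i => W i j) = 1)
    (hHcol : ∀ u, l1 (fun j => H j u) = 1)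
    (hε0 : 0 ≤ ε) (hε1 : ε < 1) (hN : ml1 N ≤ ε)
    (μ : ℝ) (hεμ : ε ≤ μ) :
    ∀ (j : Fin r) (u : Fin r ⊕ Fin m),
      ¬ (l1 (fun k => A k u - W k j) ≤ 2 * μ) → H j u < 1 - μ / 2 := by
  have hHnn : ∀ j u, 0 ≤ H j u := by
    intro j u
    rw [hH]
    rcases h : σ u with a | b
    · simp only [h, Matrix.fromCols, Matrix.of_apply, Sum.elim_inl, Matrix.one_apply]
      split_ifs <;> norm_num
    · simpa [h, Matrix.fromCols] using hHbar j b
  have hHsum : ∀ u, ∑ t, H t u = 1 := by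
    intro u
    rw [← hHcol u]
    exact Finset.sum_congr rfl fun t _ => (abs_of_nonneg (hHnn t u)).symm
  have hHle1 : ∀ j u, H j u ≤ 1 := by
    intro j u
    rw [← hHsum u]
    exact Finset.single_le_sum (fun t _ => hHnn t u) (Finset.mem_univ j)
  have hWsum : ∀ j, ∑ i, W i j = 1 := by
    intro j
    rw [← hWcol j]
    exact Finset.sum_congr rfl fun i _ => (abs_of_nonneg (hW i j)).symm
  have hNcol : ∀ u, ∑ i, |N i u| ≤ ε := by
    intro u
    refine le_trans ?_ hN
    exact le_csSup (Set.finite_range _).bddAbove ⟨u, rfl⟩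
  intro j u hnot
  have h1 : ∀ k, A k u - W k j
      = (W k j * (H j u - 1) + ∑ t ∈ Finset.univ.erase j, W k t * H t u) + N k u := by
    intro k
    rw [hA, hV]
    simp only [Matrix.add_apply, Matrix.mul_apply]
    rw [← Finset.add_sum_erase _ (fun t => W k t * H t u) (Finset.mem_univ j)]
    ring
  have key : l1 (fun k => A k u - W k j) ≤ 2 * (1 - H j u) + ε := by
    have step : ∀ k, |A k u - W k j|
        ≤ (W k j * (1 - H j u) + ∑ t ∈ Finset.univ.erase j, W k t * H t u) + |N k u| := by
      intro k
      rw [h1 k]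
      refine (abs_add_le _ _).trans ?_
      gcongr
      refine (abs_add_le _ _).trans ?_
      rw [abs_mul, abs_of_nonneg (hW k j), abs_of_nonpos (by linarith [hHle1 j u]),
        abs_of_nonneg (Finset.sum_nonneg fun t _ => mul_nonneg (hW k t) (hHnn t u))]
      apply le_of_eq; ring
    have hsum : ∑ k, ((W k j * (1 - H j u) + ∑ t ∈ Finset.univ.erase j, W k t * H t u)
        + |N k u|) ≤ 2 * (1 - H j u) + ε := by
      rw [Finset.sum_add_distrib, Finset.sum_add_distrib]
      have e1 : ∑ k, W k j * (1 - H j u) = 1 - H j u := by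
        rw [← Finset.sum_mul, hWsum, one_mul]
      have e2 : ∑ k, ∑ t ∈ Finset.univ.erase j, W k t * H t u = 1 - H j u := by
        rw [Finset.sum_comm]
        have : ∀ t ∈ Finset.univ.erase j, ∑ k, W k t * H t u = H t u := by
          intro t _
          rw [← Finset.sum_mul, hWsum, one_mul]
        rw [Finset.sum_congr rfl this, Finset.sum_erase_eq_sub (Finset.mem_univ j), hHsum]
      rw [e1, e2]
      linarith [hNcol u]
    exact le_trans (Finset.sum_le_sum fun k _ => step k) hsum
  have := not_le.mp hnot
  linarith
end
end

section
/- Under the hypotheses of the previous statement, the collection F(q) (constructed from the updated point list q with diameter threshold 3μ and score threshold r/(r+1)) equals ∪_{j ∈ R∖K} F̄_{ℓ_j}. -/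
noncomputable section
open Matrix
open scoped Classical

/-- L1 distance between columns i and u of A. -/
def cdist {d : ℕ} {ι : Type*} [Fintype ι] (A : Matrix (Fin d) ι ℝ) (i u : ι) : ℝ :=
  l1 (fun k => A k i - A k u)

/-- Ω_i : the nested family of clusters built from index i by ordering the columns
    of A by L1 distance to a_i (prefixes of such an ordering). -/
def OmegaC {d : ℕ} {ι : Type*} [Fintype ι] (A : Matrix (Fin d) ι ℝ) (i : ι) :
    Set (Finset ι) :=
  {S | i ∈ S ∧ ∀ u ∈ S, ∀ v, v ∉ S → cdist A i u ≤ cdist A i v}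

/-- diameter of a cluster S in Ω_i. -/
def diamC {d : ℕ} {ι : Type*} [Fintype ι] (A : Matrix (Fin d) ι ℝ) (i : ι)
    (S : Finset ι) : ℝ :=
  sSup {x | ∃ u ∈ S, x = cdist A i u}

/-- score of a cluster with respect to a point list. -/
def scoreS {ι : Type*} (S : Finset ι) (p : ι → ℝ) : ℝ := ∑ u ∈ S, p u

/-- F_i(q). -/
def FsetC {d : ℕ} {ι : Type*} [Fintype ι] (A : Matrix (Fin d) ι ℝ) (μ : ℝ) (r : ℕ)
    (q : ι → ℝ) (i : ι) : Set (Finset ι) :=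
  {S | S ∈ OmegaC A i ∧ diamC A i S ≤ 3 * μ ∧ (r : ℝ) / (r + 1) < scoreS S q}

/-- G_i(q). -/
def GsetC {d : ℕ} {ι : Type*} [Fintype ι] (A : Matrix (Fin d) ι ℝ) (r : ℕ)
    (q : ι → ℝ) (i : ι) : Set (Finset ι) :=
  {S | S ∈ OmegaC A i ∧ (r : ℝ) / (r + 1) < scoreS S q}

/-- F̄_j : clusters of F all of whose columns are within 8μ of w_j. -/
def FbarC {d r m : ℕ} (A : Matrix (Fin d) (Fin r ⊕ Fin m) ℝ)
    (W : Matrix (Fin d) (Fin r) ℝ) (μ : ℝ) (q : Fin r ⊕ Fin m → ℝ) (j : Fin r) :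
    Set (Finset (Fin r ⊕ Fin m)) :=
  {S | (∃ i, S ∈ FsetC A μ r q i) ∧ ∀ u ∈ S, l1 (fun k => A k u - W k j) ≤ 8 * μ}

namespace Aux

variable {n : Type*} [Fintype n]

lemma l1_nonneg (v : n → ℝ) : 0 ≤ l1 v :=
  Finset.sum_nonneg fun _ _ => abs_nonneg _

lemma abs_sum_le_l1 (v : n → ℝ) : |∑ i, v i| ≤ l1 v :=
  Finset.abs_sum_le_sum_abs _ _

lemma l1_add_le (f g : n → ℝ) : l1 (fun i => f i + g i) ≤ l1 f + l1 g := by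
  rw [l1, l1, l1, ← Finset.sum_add_distrib]
  exact Finset.sum_le_sum fun i _ => abs_add_le _ _

lemma l1_tri (f g h : n → ℝ) :
    l1 (fun i => f i - h i) ≤ l1 (fun i => f i - g i) + l1 (fun i => g i - h i) := by
  have := l1_add_le (fun i => f i - g i) (fun i => g i - h i)
  simpa using this

lemma l1_comm (f g : n → ℝ) : l1 (fun i => f i - g i) = l1 (fun i => g i - f i) := by
  unfold l1; exact Finset.sum_congr rfl fun i _ => abs_sub_comm _ _

lemma l1_smul (t : ℝ) (v : n → ℝ) : l1 (fun i => t * v i) = |t| * l1 v := by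
  unfold l1; rw [Finset.mul_sum]; exact Finset.sum_congr rfl fun i _ => abs_mul _ _

lemma col_le_ml1 {β : Type*} [Fintype β] (M : Matrix n β ℝ) (j : β) :
    ∑ i, |M i j| ≤ ml1 M :=
  le_csSup (Set.Finite.bddAbove (Set.finite_range _)) (Set.mem_range_self j)

lemma ml1_le {β : Type*} [Fintype β] [Nonempty β] (M : Matrix n β ℝ) (c : ℝ)
    (h : ∀ j, ∑ i, |M i j| ≤ c) : ml1 M ≤ c :=
  csSup_le (Set.range_nonempty _) (by rintro x ⟨j, rfl⟩; exact h j)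

end Aux

namespace Aux

variable {d r : ℕ} {W : Matrix (Fin d) (Fin r) ℝ}

lemma kappa_bdd : BddBelow {c | ∃ (j : Fin r) (z : Fin r → ℝ), (∀ k, 0 ≤ z k) ∧ z j = 0 ∧
    c = l1 (fun i => W i j - ∑ k, W i k * z k)} := by
  refine ⟨0, ?_⟩
  rintro c ⟨j, z, _, _, rfl⟩
  exact l1_nonneg _

lemma omega_bdd : BddBelow {c | ∃ j₁ j₂ : Fin r, j₁ ≠ j₂ ∧
    c = l1 (fun i => W i j₁ - W i j₂)} := by
  refine ⟨0, ?_⟩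
  rintro c ⟨j₁, j₂, _, rfl⟩
  exact l1_nonneg _

lemma kappa_le (j : Fin r) (z : Fin r → ℝ) (hz : ∀ k, 0 ≤ z k) (hzj : z j = 0) :
    kappa W ≤ l1 (fun i => W i j - ∑ k, W i k * z k) :=
  csInf_le kappa_bdd ⟨j, z, hz, hzj, rfl⟩

lemma omega_le (j₁ j₂ : Fin r) (h : j₁ ≠ j₂) :
    omegaW W ≤ l1 (fun i => W i j₁ - W i j₂) :=
  csInf_le omega_bdd ⟨j₁, j₂, h, rfl⟩

lemma kappa_le_one (j : Fin r) (hWcol : ∀ j, l1 (fun i => W i j) = 1) : kappa W ≤ 1 := by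
  have h := kappa_le (W := W) j (fun _ => 0) (fun _ => le_rfl) rfl
  simpa [hWcol j] using h

lemma kappa_le_omega (j₁ j₂ : Fin r) (h : j₁ ≠ j₂) : kappa W ≤ omegaW W := by
  refine le_csInf ⟨_, j₁, j₂, h, rfl⟩ ?_
  rintro b ⟨k₁, k₂, hk, rfl⟩
  have h2 := kappa_le (W := W) k₁ (fun k => if k = k₂ then 1 else 0)
    (fun k => by positivity) (by simp [hk])
  simpa [mul_ite, Finset.sum_ite_eq'] using h2

lemma omega_le_two (j₁ j₂ : Fin r) (h : j₁ ≠ j₂)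
    (hWcol : ∀ j, l1 (fun i => W i j) = 1) : omegaW W ≤ 2 := by
  refine (omega_le j₁ j₂ h).trans ?_
  have h1 := l1_tri (fun i => W i j₁) (fun _ => (0:ℝ)) (fun i => W i j₂)
  have h2 : l1 (fun i => (0:ℝ) - W i j₂) = 1 := by
    rw [← hWcol j₂]; unfold l1
    exact Finset.sum_congr rfl fun i _ => by simp
  simp only [sub_zero] at h1
  rw [hWcol j₁, h2] at h1
  linarith

lemma omega_empty (h : ¬ ∃ j₁ j₂ : Fin r, j₁ ≠ j₂) : omegaW W = 0 := by
  have : {c | ∃ j₁ j₂ : Fin r, j₁ ≠ j₂ ∧ c = l1 (fun i => W i j₁ - W i j₂)} = ∅ := by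
    ext c; simp only [Set.mem_setOf_eq, Set.mem_empty_iff_false, iff_false]
    rintro ⟨j₁, j₂, hne, _⟩
    exact h ⟨j₁, j₂, hne⟩
  rw [omegaW, this, Real.sInf_empty]

end Aux

set_option maxHeartbeats 4000000 in
/-- F(q) = ∪_{j ∈ R∖K} F̄_{ℓ_j}. -/
theorem F_of_updated_point_list
    {d r m : ℕ} (W : Matrix (Fin d) (Fin r) ℝ) (Hbar : Matrix (Fin r) (Fin m) ℝ)
    (σ : Equiv.Perm (Fin r ⊕ Fin m))
    (N A V : Matrix (Fin d) (Fin r ⊕ Fin m) ℝ)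
    (H : Matrix (Fin r) (Fin r ⊕ Fin m) ℝ) (ε : ℝ)
    (hW : ∀ i j, 0 ≤ W i j) (hHbar : ∀ i j, 0 ≤ Hbar i j)
    (hH : H = fun j u => Matrix.fromCols (1 : Matrix (Fin r) (Fin r) ℝ) Hbar j (σ u))
    (hV : V = W * H) (hA : A = V + N)
    (hVcol : ∀ u, l1 (fun i => V i u) = 1)
    (hWcol : ∀ j, l1 (fun i => W i j) = 1)
    (hHcol : ∀ u, l1 (fun j => H j u) = 1)
    (hε0 : 0 ≤ ε) (hN : ml1 N ≤ ε)
    (Xopt : Matrix (Fin r ⊕ Fin m) (Fin r ⊕ Fin m) ℝ)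
    (hfeas : Feas Xopt r)
    (hopt : ∀ X : Matrix (Fin r ⊕ Fin m) (Fin r ⊕ Fin m) ℝ,
      Feas X r → ml1 (A - A * Xopt) ≤ ml1 (A - A * X))
    (μ : ℝ)
    (hcase :
      (ε < kappa W * omegaW W / (578 * (r + 1)) ∧
        ∃ ξ : ℝ, 0 < ξ ∧ ξ < kappa W / 35 ∧
          μ = 17 * (r + 1) * ε / kappa W + ξ) ∨
      (ε < (kappa W) ^ 2 / (289 * (r + 1) ^ 2) ∧
        ∃ ξ : ℝ, 0 < ξ ∧ ξ < kappa W / 35 ∧ μ = Real.sqrt ε + ξ))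
    (p : Fin r ⊕ Fin m → ℝ) (hp : p = fun u => Xopt u u)
    (e : Fin r ≃ Fin r) (k : ℕ) (hk : k < r)
    (Scl : Fin k → Finset (Fin r ⊕ Fin m))
    (hScl : ∀ j : Fin k, Scl j ∈ FbarC A W μ p (e (Fin.castLE hk.le j)))
    (q : Fin r ⊕ Fin m → ℝ)
    (hq : ∀ u, q u = if ∃ j : Fin k, u ∈ Scl j then 0 else p u) :
    ∀ S : Finset (Fin r ⊕ Fin m),
      (∃ i, S ∈ FsetC A μ r q i) ↔
        ∃ j : Fin r, k ≤ (j : ℕ) ∧ S ∈ FbarC A W μ p (e j) := by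
  classical
  have hr1 : 1 ≤ r := Nat.one_le_iff_ne_zero.mpr (by omega)
  have hrR : (1:ℝ) ≤ (r:ℝ) := by exact_mod_cast hr1
  -- kappa facts
  have hκpos : 0 < kappa W := by
    rcases hcase with ⟨_, ξ, hξ0, hξκ, _⟩ | ⟨_, ξ, hξ0, hξκ, _⟩ <;> linarith
  have hκ1 : kappa W ≤ 1 := Aux.kappa_le_one ⟨0, by omega⟩ hWcol
  have hεμ : 17 * (r + 1) * ε ≤ kappa W * μ := by
    rcases hcase with ⟨hε1, ξ, hξ0, hξκ, hμ⟩ | ⟨hε2, ξ, hξ0, hξκ, hμ⟩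
    · have h2 : kappa W * μ = 17 * (r+1) * ε + kappa W * ξ := by
        rw [hμ]; field_simp
      nlinarith
    · have hs := Real.sq_sqrt hε0
      have hsnn := Real.sqrt_nonneg ε
      have h2 : Real.sqrt ε < kappa W / (17 * (r+1)) := by
        refine (Real.sqrt_lt' (by positivity)).mpr ?_
        calc ε < (kappa W)^2 / (289 * (r+1)^2) := hε2
        _ = (kappa W / (17 * (r+1)))^2 := by rw [div_pow]; ring_nf
      have h3 : Real.sqrt ε * (17*(r+1)) < kappa W := by
        rw [div_eq_mul_inv] at h2
        have := (lt_div_iff₀ (show (0:ℝ) < 17*(r+1) by positivity)).mp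
          (by rw [div_eq_mul_inv]; exact h2)
        linarith
      have h4 : Real.sqrt ε * (17*(r+1)) * Real.sqrt ε ≤ kappa W * Real.sqrt ε :=
        mul_le_mul_of_nonneg_right h3.le hsnn
      have h5 : kappa W * Real.sqrt ε ≤ kappa W * μ := by
        refine mul_le_mul_of_nonneg_left ?_ hκpos.le
        rw [hμ]; linarith
      calc 17 * (r+1) * ε = Real.sqrt ε * (17*(r+1)) * Real.sqrt ε := by
            have hms : Real.sqrt ε * Real.sqrt ε = ε := Real.mul_self_sqrt hε0
            linear_combination (17*((r:ℝ)+1)) * hms.symm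
      _ ≤ kappa W * μ := le_trans h4 h5
  have hμpos : 0 < μ := by
    rcases hcase with ⟨_, ξ, hξ0, hξκ, hμ⟩ | ⟨_, ξ, hξ0, hξκ, hμ⟩
    · have h0 : 0 ≤ 17*(r+1)*ε/kappa W := by positivity
      rw [hμ]; linarith
    · have h0 := Real.sqrt_nonneg ε
      rw [hμ]; linarith
  have hsqrtb : ∀ ξ : ℝ, 0 < ξ → ξ < kappa W / 35 → μ = Real.sqrt ε + ξ →
      ε < (kappa W)^2/(289*(r+1)^2) → μ ≤ 9/100 := by
    intro ξ hξ0 hξκ hμ hε2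
    have hsnn := Real.sqrt_nonneg ε
    have h2 : Real.sqrt ε < kappa W / (17 * (r+1)) := by
      refine (Real.sqrt_lt' (by positivity)).mpr ?_
      calc ε < (kappa W)^2 / (289 * (r+1)^2) := hε2
      _ = (kappa W / (17 * (r+1)))^2 := by rw [div_pow]; ring_nf
    have h3 : kappa W / (17*(r+1)) ≤ 1/34 := by
      rw [div_le_div_iff₀ (by positivity) (by norm_num)]
      nlinarith
    have h4 : kappa W / 35 ≤ 1/35 := by linarith
    rw [hμ]; linarith
  have hcase1ω : ∀ ξ : ℝ, 0 < ξ → ξ < kappa W / 35 → μ = 17*(r+1)*ε/kappa W + ξ →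
      ε < kappa W * omegaW W / (578 * (r+1)) → (∃ j₁ j₂ : Fin r, j₁ ≠ j₂) →
      μ < omegaW W / 34 + kappa W / 35 := by
    rintro ξ hξ0 hξκ hμ hε1 ⟨j₁, j₂, hne⟩
    have hκω := Aux.kappa_le_omega (W := W) j₁ j₂ hne
    have h1 : ε * (578*(r+1)) < kappa W * omegaW W := by
      have := (lt_div_iff₀ (show (0:ℝ) < 578*(r+1) by positivity)).mp hε1
      linarith
    have h2 : 17*(r+1)*ε/kappa W < omegaW W / 34 := by
      rw [div_lt_div_iff₀ hκpos (by norm_num)]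
      nlinarith
    rw [hμ]; linarith
  have hμ09 : μ ≤ 9/100 := by
    rcases hcase with ⟨hε1, ξ, hξ0, hξκ, hμ⟩ | ⟨hε2, ξ, hξ0, hξκ, hμ⟩
    · by_cases hpair : ∃ j₁ j₂ : Fin r, j₁ ≠ j₂
      · obtain ⟨j₁, j₂, hne⟩ := hpair
        have hω2 := Aux.omega_le_two j₁ j₂ hne hWcol
        have h5 := hcase1ω ξ hξ0 hξκ hμ hε1 ⟨j₁, j₂, hne⟩
        have h4 : kappa W / 35 ≤ 1/35 := by linarith
        have : omegaW W / 34 ≤ 2/34 := by linarith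
        linarith
      · rw [Aux.omega_empty hpair] at hε1
        simp at hε1
        linarith
    · exact hsqrtb ξ hξ0 hξκ hμ hε2
  have hεs : ε ≤ 3/1000 := by
    have h1 : 17 * (r+1) * ε ≤ 9/100 := by nlinarith
    nlinarith
  have h16 : ∀ j j' : Fin r, j ≠ j' → 16 * μ < omegaW W := by
    intro j j' hne
    have hκω := Aux.kappa_le_omega (W := W) j j' hne
    have hωpos : 0 < omegaW W := lt_of_lt_of_le hκpos hκω
    rcases hcase with ⟨hε1, ξ, hξ0, hξκ, hμ⟩ | ⟨hε2, ξ, hξ0, hξκ, hμ⟩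
    · have h5 := hcase1ω ξ hξ0 hξκ hμ hε1 ⟨j, j', hne⟩
      nlinarith
    · have hr2 : 2 ≤ r := by
        have h1 : (j:ℕ) ≠ (j':ℕ) := fun h => hne (Fin.ext h)
        have := j.isLt; have := j'.isLt; omega
      have hrR2 : (2:ℝ) ≤ (r:ℝ) := by exact_mod_cast hr2
      have hsnn := Real.sqrt_nonneg ε
      have h2 : Real.sqrt ε < kappa W / (17 * (r+1)) := by
        refine (Real.sqrt_lt' (by positivity)).mpr ?_
        calc ε < (kappa W)^2 / (289 * (r+1)^2) := hε2
        _ = (kappa W / (17 * (r+1)))^2 := by rw [div_pow]; ring_nf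
      have h3 : kappa W / (17*(r+1)) ≤ kappa W/51 := by
        rw [div_le_div_iff₀ (by positivity) (by norm_num)]
        nlinarith
      have h4 : μ < kappa W/51 + kappa W/35 := by rw [hμ]; linarith
      nlinarith
  -- entrywise facts about H, W, V, N
  have hHfc : ∀ j u, H j u = Matrix.fromCols 1 Hbar j (σ u) := by
    intro j u; rw [hH]
  have hH0 : ∀ j u, 0 ≤ H j u := by
    intro j u
    rw [hHfc]
    rcases hσu : σ u with j' | t
    · rw [Matrix.fromCols_apply_inl, Matrix.one_apply]
      split <;> norm_num
    · rw [Matrix.fromCols_apply_inr]; exact hHbar j t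
  have hHd : ∀ j j' : Fin r, H j (σ.symm (Sum.inl j')) = if j = j' then 1 else 0 := by
    intro j j'
    rw [hHfc, Equiv.apply_symm_apply, Matrix.fromCols_apply_inl, Matrix.one_apply]
  have hH1 : ∀ j u, H j u ≤ 1 := by
    intro j u
    calc H j u ≤ |H j u| := le_abs_self _
    _ ≤ ∑ j', |H j' u| := Finset.single_le_sum
        (f := fun j' => |H j' u|) (fun _ _ => abs_nonneg _) (Finset.mem_univ j)
    _ = 1 := hHcol u
  have hHsum : ∀ u, ∑ j, H j u = 1 := by
    intro u
    have h := hHcol u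
    rw [l1] at h
    rw [← h]
    exact Finset.sum_congr rfl fun j _ => (abs_of_nonneg (hH0 j u)).symm
  have hWsum : ∀ j, ∑ i, W i j = 1 := by
    intro j
    have h := hWcol j
    rw [l1] at h
    rw [← h]
    exact Finset.sum_congr rfl fun i _ => (abs_of_nonneg (hW i j)).symm
  have hNcol : ∀ u, ∑ i, |N i u| ≤ ε := fun u => le_trans (Aux.col_le_ml1 N u) hN
  have hA' : ∀ i u, A i u = (∑ j, W i j * H j u) + N i u := by
    intro i u
    rw [hA, hV, Matrix.add_apply, Matrix.mul_apply]
  -- the reference feasible solution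
  set Xh : Matrix (Fin r ⊕ Fin m) (Fin r ⊕ Fin m) ℝ :=
    fun s u => Sum.elim (fun j => H j u) (fun _ => 0) (σ s) with hXh
  have hXhapp : ∀ s u, Xh s u = Sum.elim (fun j => H j u) (fun _ => (0:ℝ)) (σ s) :=
    fun s u => rfl
  have hXh0 : ∀ s u, 0 ≤ Xh s u := by
    intro s u
    rw [hXhapp]
    rcases hσs : σ s with j | t
    · simpa using hH0 j u
    · simp
  have hXhcolsum : ∀ u, ∑ s, Xh s u = 1 := by
    intro u
    rw [← Equiv.sum_comp σ.symm (fun s => Xh s u), Fintype.sum_sum_type]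
    have h1 : ∀ j : Fin r, Xh (σ.symm (Sum.inl j)) u = H j u := by
      intro j
      rw [hXhapp, Equiv.apply_symm_apply]
      rfl
    have h2 : ∀ t : Fin m, Xh (σ.symm (Sum.inr t)) u = 0 := by
      intro t
      rw [hXhapp, Equiv.apply_symm_apply]
      rfl
    simp only [h1, h2]
    rw [hHsum u]
    simp
  have hXhfeas : Feas Xh r := by
    refine ⟨?_, ?_, hXh0, ?_⟩
    · show ∑ s, Xh s s = (r:ℝ)
      rw [← Equiv.sum_comp σ.symm (fun s => Xh s s), Fintype.sum_sum_type]
      have h1 : ∀ j : Fin r, Xh (σ.symm (Sum.inl j)) (σ.symm (Sum.inl j)) = 1 := by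
        intro j
        rw [hXhapp, Equiv.apply_symm_apply]
        show H j (σ.symm (Sum.inl j)) = 1
        rw [hHd]; simp
      have h2 : ∀ t : Fin m, Xh (σ.symm (Sum.inr t)) (σ.symm (Sum.inr t)) = 0 := by
        intro t
        rw [hXhapp, Equiv.apply_symm_apply]
        rfl
      simp only [h1, h2]
      simp
    · intro s
      rw [hXhapp]
      rcases hσs : σ s with j | t
      · simpa using hH1 j s
      · simp
    · intro s u
      rw [hXhapp, hXhapp]
      rcases hσs : σ s with j | t
      · have hs : s = σ.symm (Sum.inl j) := by
          rw [← hσs]; simp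
        simp only [Sum.elim_inl]
        rw [hs, hHd]
        simp [hH1 j u]
      · simp
  have hHXh : H * Xh = H := by
    ext j u
    rw [Matrix.mul_apply]
    rw [← Equiv.sum_comp σ.symm (fun s => H j s * Xh s u), Fintype.sum_sum_type]
    have h1 : ∀ j' : Fin r, H j (σ.symm (Sum.inl j')) * Xh (σ.symm (Sum.inl j')) u
        = (if j = j' then 1 else 0) * H j' u := by
      intro j'
      rw [hHd, hXhapp, Equiv.apply_symm_apply]
      rfl
    have h2 : ∀ t : Fin m, H j (σ.symm (Sum.inr t)) * Xh (σ.symm (Sum.inr t)) u = 0 := by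
      intro t
      rw [hXhapp, Equiv.apply_symm_apply]
      simp
    simp only [h1, h2]
    simp [Finset.sum_ite_eq]
  have hAXh : A - A * Xh = N - N * Xh := by
    rw [hA, Matrix.add_mul, hV, Matrix.mul_assoc, hHXh]
    abel
  have hXhres : ∀ u, ∑ i, |(A - A * Xh) i u| ≤ 2 * ε := by
    intro u
    have hent : ∀ i, (A - A * Xh) i u = N i u - ∑ s, N i s * Xh s u := by
      intro i
      rw [hAXh, Matrix.sub_apply, Matrix.mul_apply]
    calc ∑ i, |(A - A * Xh) i u|
        ≤ ∑ i, (|N i u| + ∑ s, |N i s| * Xh s u) := by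
          refine Finset.sum_le_sum fun i _ => ?_
          rw [hent i]
          refine le_trans (abs_sub _ _) ?_
          gcongr
          refine le_trans (Finset.abs_sum_le_sum_abs _ _) ?_
          refine Finset.sum_le_sum fun s _ => ?_
          rw [abs_mul, abs_of_nonneg (hXh0 s u)]
    _ = (∑ i, |N i u|) + ∑ s, (∑ i, |N i s|) * Xh s u := by
          rw [Finset.sum_add_distrib, Finset.sum_comm]
          congr 1
          exact Finset.sum_congr rfl fun s _ => by rw [Finset.sum_mul]
    _ ≤ ε + ∑ s, ε * Xh s u := by
          gcongr with s hs
          · exact hNcol u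
          · exact hXh0 s u
          · exact hNcol s
    _ = ε + ε * ∑ s, Xh s u := by rw [Finset.mul_sum]
    _ = 2 * ε := by rw [hXhcolsum u]; ring
  haveI : Nonempty (Fin r ⊕ Fin m) := ⟨Sum.inl ⟨0, hr1⟩⟩
  have hml1opt : ml1 (A - A * Xopt) ≤ 2 * ε :=
    le_trans (hopt Xh hXhfeas) (Aux.ml1_le _ _ hXhres)
  have hcolres : ∀ u, ∑ i, |A i u - (A * Xopt) i u| ≤ 2 * ε := by
    intro u
    refine le_trans (le_of_eq ?_) (le_trans (Aux.col_le_ml1 (A - A * Xopt) u) hml1opt)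
    exact Finset.sum_congr rfl fun i _ => by rw [Matrix.sub_apply]
  -- feasibility components
  obtain ⟨htr, hdiag1, hX0, hXd⟩ := hfeas
  have hp0 : ∀ u, 0 ≤ p u := by intro u; rw [hp]; exact hX0 u u
  have htot : ∑ u, p u = (r:ℝ) := by
    rw [hp]
    simpa [Matrix.trace, Matrix.diag] using htr
  -- the 2μ and 8μ balls
  set T : Fin r → Finset (Fin r ⊕ Fin m) :=
    fun j => Finset.univ.filter (fun u => l1 (fun i0 => A i0 u - W i0 j) ≤ 2*μ) with hT
  set B : Fin r → Finset (Fin r ⊕ Fin m) :=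
    fun j => Finset.univ.filter (fun u => l1 (fun i0 => A i0 u - W i0 j) ≤ 8*μ) with hB
  have hTmem : ∀ j u, u ∈ T j ↔ l1 (fun i0 => A i0 u - W i0 j) ≤ 2*μ := by
    intro j u; rw [hT]; simp
  have hBmem : ∀ j u, u ∈ B j ↔ l1 (fun i0 => A i0 u - W i0 j) ≤ 8*μ := by
    intro j u; rw [hB]; simp
  -- proximity to w_j controlled by H entries
  have hprox : ∀ (j : Fin r) (u), l1 (fun i0 => A i0 u - W i0 j) ≤ 2*(1 - H j u) + ε := by
    intro j u
    have h0 : (fun i0 => A i0 u - W i0 j) =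
        fun i0 => ((∑ j', W i0 j' * H j' u) - W i0 j) + N i0 u := by
      funext i0; rw [hA']; ring
    rw [h0]
    refine le_trans (Aux.l1_add_le _ _) ?_
    have hNb : l1 (fun i0 => N i0 u) ≤ ε := hNcol u
    have hWb : l1 (fun i0 => (∑ j', W i0 j' * H j' u) - W i0 j) ≤ 2*(1 - H j u) := by
      have hstep : ∀ i0, |(∑ j', W i0 j' * H j' u) - W i0 j| ≤
          ∑ j', W i0 j' * |H j' u - (if j' = j then 1 else 0)| := by
        intro i0
        have hrw : (∑ j', W i0 j' * H j' u) - W i0 j =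
            ∑ j', W i0 j' * (H j' u - (if j' = j then 1 else 0)) := by
          rw [Finset.sum_congr rfl (fun j' _ => mul_sub (W i0 j') (H j' u) _),
            Finset.sum_sub_distrib]
          congr 1
          simp [mul_ite, Finset.sum_ite_eq']
        rw [hrw]
        refine le_trans (Finset.abs_sum_le_sum_abs _ _) ?_
        refine Finset.sum_le_sum fun j' _ => ?_
        rw [abs_mul, abs_of_nonneg (hW _ _)]
      calc l1 (fun i0 => (∑ j', W i0 j' * H j' u) - W i0 j)
          ≤ ∑ i0, ∑ j', W i0 j' * |H j' u - (if j' = j then 1 else 0)| :=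
            Finset.sum_le_sum fun i0 _ => hstep i0
      _ = ∑ j', (∑ i0, W i0 j') * |H j' u - (if j' = j then 1 else 0)| := by
            rw [Finset.sum_comm]
            exact Finset.sum_congr rfl fun j' _ => by rw [Finset.sum_mul]
      _ = ∑ j', |H j' u - (if j' = j then 1 else 0)| := by
            refine Finset.sum_congr rfl fun j' _ => ?_
            rw [hWsum j', one_mul]
      _ = 2*(1 - H j u) := by
            rw [← Finset.add_sum_erase _ _ (Finset.mem_univ j)]
            have h1 : |H j u - (if j = j then 1 else 0)| = 1 - H j u := by
              rw [if_pos rfl, abs_sub_comm, abs_of_nonneg (by linarith [hH1 j u])]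
            have h2 : ∑ j' ∈ Finset.univ.erase j, |H j' u - (if j' = j then 1 else 0)|
                = ∑ j' ∈ Finset.univ.erase j, H j' u := by
              refine Finset.sum_congr rfl fun j' hj' => ?_
              rw [if_neg (Finset.mem_erase.mp hj').1, sub_zero,
                abs_of_nonneg (hH0 j' u)]
            have h3 : ∑ j' ∈ Finset.univ.erase j, H j' u = 1 - H j u := by
              rw [Finset.sum_erase_eq_sub (Finset.mem_univ j), hHsum u]
            rw [h1, h2, h3]; ring
    linarith
  have hεμ' : ε ≤ μ/34 := by nlinarith
  -- the concentration lemma : each 2μ-ball captures diagonal mass ≥ 1 - 1/(r+1)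
  have hTmass : ∀ j : Fin r, 1 - 1/((r:ℝ)+1) ≤ ∑ u ∈ T j, p u := by
    intro j
    set uj : Fin r ⊕ Fin m := σ.symm (Sum.inl j) with huj
    have hAuj : ∀ i, A i uj = W i j + N i uj := by
      intro i
      rw [hA' i uj]
      congr 1
      have : ∀ j', W i j' * H j' uj = if j' = j then W i j' else 0 := by
        intro j'
        rw [huj, hHd j' j]
        split <;> simp
      rw [Finset.sum_congr rfl fun j' _ => this j']
      simp [Finset.sum_ite_eq']
    have hres := hcolres uj
    -- notation for the column of Xopt
    have hx0 : ∀ s, 0 ≤ Xopt s uj := fun s => hX0 s uj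
    have hxp : ∀ s, Xopt s uj ≤ p s := by intro s; rw [hp]; exact hXd s uj
    -- column sums of A are close to 1
    have hV0 : ∀ i u, 0 ≤ V i u := by
      intro i u
      rw [hV, Matrix.mul_apply]
      exact Finset.sum_nonneg fun j' _ => mul_nonneg (hW i j') (hH0 j' u)
    have hVsum : ∀ u, ∑ i, V i u = 1 := by
      intro u
      have h := hVcol u
      rw [l1] at h
      rw [← h]
      exact Finset.sum_congr rfl fun i _ => (abs_of_nonneg (hV0 i u)).symm
    have hAcs : ∀ s, |(∑ i, A i s) - 1| ≤ ε := by
      intro s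
      have h1 : ∑ i, A i s = 1 + ∑ i, N i s := by
        rw [Finset.sum_congr rfl fun i _ => by rw [hA, Matrix.add_apply],
          Finset.sum_add_distrib, hVsum s]
      rw [h1]
      simpa using le_trans (Finset.abs_sum_le_sum_abs _ _) (hNcol s)
    -- bound |1 - Σx|
    have hsplit : ∑ i, (A i uj - (A * Xopt) i uj) =
        (∑ i, A i uj) - ∑ s, Xopt s uj * (∑ i, A i s) := by
      rw [Finset.sum_sub_distrib]
      congr 1
      have hma : ∑ i, (A * Xopt) i uj = ∑ i, ∑ s, A i s * Xopt s uj :=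
        Finset.sum_congr rfl fun i _ => by rw [Matrix.mul_apply]
      rw [hma, Finset.sum_comm]
      refine Finset.sum_congr rfl fun s _ => ?_
      rw [Finset.mul_sum]
      exact Finset.sum_congr rfl fun i _ => mul_comm _ _
    have d2 : |∑ i, (A i uj - (A * Xopt) i uj)| ≤ 2*ε :=
      le_trans (Finset.abs_sum_le_sum_abs _ _) hres
    have d3 : |∑ s, Xopt s uj * ((∑ i, A i s) - 1)| ≤ ε * ∑ s, Xopt s uj := by
      refine le_trans (Finset.abs_sum_le_sum_abs _ _) ?_
      rw [Finset.mul_sum]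
      refine Finset.sum_le_sum fun s _ => ?_
      rw [abs_mul, abs_of_nonneg (hx0 s), mul_comm ε _]
      exact mul_le_mul_of_nonneg_left (hAcs s) (hx0 s)
    have hsq : ∑ s, Xopt s uj * ((∑ i, A i s) - 1) =
        (∑ s, Xopt s uj * (∑ i, A i s)) - ∑ s, Xopt s uj := by
      rw [← Finset.sum_sub_distrib]
      exact Finset.sum_congr rfl fun s _ => by ring
    have e1 : |1 - ∑ s, Xopt s uj| ≤ 3*ε + ε * ∑ s, Xopt s uj := by
      have d1 := abs_le.mp (hAcs uj)
      have d2' := abs_le.mp d2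
      have d3' := abs_le.mp d3
      rw [hsplit] at d2'
      rw [hsq] at d3'
      rw [abs_le]
      constructor <;> nlinarith [d1.1, d1.2, d2'.1, d2'.2, d3'.1, d3'.2]
    have hxsnn : 0 ≤ ∑ s, Xopt s uj := Finset.sum_nonneg fun s _ => hx0 s
    have e2 : ∑ s, Xopt s uj ≤ 51/50 := by
      have := (abs_le.mp e1).1
      nlinarith
    have e1' : (1 : ℝ) - ∑ s, Xopt s uj ≤ (201/50)*ε ∧
        (∑ s, Xopt s uj) - 1 ≤ (201/50)*ε := by
      have h := abs_le.mp e1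
      constructor <;> nlinarith [h.1, h.2]
    -- mixing weights of the approximating column
    set y : Fin r → ℝ := fun j' => ∑ s, H j' s * Xopt s uj with hy
    have hy0 : ∀ j', 0 ≤ y j' := fun j' =>
      Finset.sum_nonneg fun s _ => mul_nonneg (hH0 j' s) (hx0 s)
    have hyl : l1 (fun i => W i j - ∑ j', W i j' * y j') ≤ (201/50)*ε := by
      have hdec : ∀ i, W i j - ∑ j', W i j' * y j' =
          (A i uj - (A * Xopt) i uj) - (N i uj - ∑ s, N i s * Xopt s uj) := by
        intro i
        have hAX : (A * Xopt) i uj =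
            (∑ j', W i j' * y j') + ∑ s, N i s * Xopt s uj := by
          rw [Matrix.mul_apply]
          have h1 : ∀ s, A i s * Xopt s uj =
              (∑ j', W i j' * H j' s * Xopt s uj) + N i s * Xopt s uj := by
            intro s
            rw [hA' i s, add_mul, Finset.sum_mul]
          rw [Finset.sum_congr rfl fun s _ => h1 s, Finset.sum_add_distrib,
            Finset.sum_comm]
          congr 1
          refine Finset.sum_congr rfl fun j' _ => ?_
          rw [hy]
          dsimp only
          rw [Finset.mul_sum]
          exact Finset.sum_congr rfl fun s _ => by ring
        rw [hAX, hAuj i]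
        ring
      have hdec' : (fun i => W i j - ∑ j', W i j' * y j') =
          fun i => (A i uj - (A * Xopt) i uj) - (N i uj - ∑ s, N i s * Xopt s uj) :=
        funext hdec
      rw [hdec', l1]
      have habs : ∀ i : Fin d, |(A i uj - (A * Xopt) i uj) -
          (N i uj - ∑ s, N i s * Xopt s uj)| ≤
          |A i uj - (A * Xopt) i uj| + |N i uj| + |∑ s, N i s * Xopt s uj| := by
        intro i
        calc |(A i uj - (A * Xopt) i uj) - (N i uj - ∑ s, N i s * Xopt s uj)|
            ≤ |A i uj - (A * Xopt) i uj| + |N i uj - ∑ s, N i s * Xopt s uj| :=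
              abs_sub _ _
        _ ≤ _ := by
              have := abs_sub (N i uj) (∑ s, N i s * Xopt s uj)
              linarith
      refine le_trans (Finset.sum_le_sum fun i _ => habs i) ?_
      rw [Finset.sum_add_distrib, Finset.sum_add_distrib]
      have b1 : ∑ i, |A i uj - (A * Xopt) i uj| ≤ 2*ε := hres
      have b2 : ∑ i, |N i uj| ≤ ε := hNcol uj
      have b3 : ∑ i, |∑ s, N i s * Xopt s uj| ≤ ε * ∑ s, Xopt s uj := by
        calc ∑ i, |∑ s, N i s * Xopt s uj|
            ≤ ∑ i, ∑ s, |N i s| * Xopt s uj := by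
              refine Finset.sum_le_sum fun i _ => ?_
              refine le_trans (Finset.abs_sum_le_sum_abs _ _) ?_
              exact Finset.sum_le_sum fun s _ => by
                rw [abs_mul, abs_of_nonneg (hx0 s)]
        _ = ∑ s, (∑ i, |N i s|) * Xopt s uj := by
              rw [Finset.sum_comm]
              exact Finset.sum_congr rfl fun s _ => by rw [Finset.sum_mul]
        _ ≤ ∑ s, ε * Xopt s uj := by
              refine Finset.sum_le_sum fun s _ => ?_
              exact mul_le_mul_of_nonneg_right (hNcol s) (hx0 s)
        _ = ε * ∑ s, Xopt s uj := by rw [Finset.mul_sum]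
      have : ε * ∑ s, Xopt s uj ≤ ε * (51/50) :=
        mul_le_mul_of_nonneg_left e2 hε0
      linarith
    -- kappa forces y j to be close to 1
    have e4 : 1 - (201/50)*ε/kappa W ≤ y j := by
      by_cases hyj : 1 ≤ y j
      · have h0 : 0 ≤ (201/50)*ε/kappa W := by positivity
        linarith
      push_neg at hyj
      have ht0 : 0 < 1 - y j := by linarith
      set z : Fin r → ℝ := fun j'' => if j'' = j then 0 else y j'' / (1 - y j) with hz
      have hz0 : ∀ j'', 0 ≤ z j'' := by
        intro j''
        rw [hz]
        dsimp only
        split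
        · exact le_rfl
        · exact div_nonneg (hy0 j'') ht0.le
      have hzj : z j = 0 := by rw [hz]; simp
      have hid : ∀ i, W i j - ∑ j', W i j' * y j' =
          (1 - y j) * (W i j - ∑ j'', W i j'' * z j'') := by
        intro i
        have h1 : ∀ j'', (1 - y j) * (W i j'' * z j'') =
            W i j'' * y j'' - (if j'' = j then W i j'' * y j'' else 0) := by
          intro j''
          rw [hz]
          dsimp only
          by_cases hc : j'' = j
          · rw [if_pos hc, if_pos hc]
            subst hc
            ring
          · rw [if_neg hc, if_neg hc, sub_zero]
            have hcan : (1 - y j) * (y j'' / (1 - y j)) = y j'' := by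
              field_simp
            calc (1 - y j) * (W i j'' * (y j'' / (1 - y j)))
                = W i j'' * ((1 - y j) * (y j'' / (1 - y j))) := by ring
            _ = W i j'' * y j'' := by rw [hcan]
        have h2 : (1 - y j) * (W i j - ∑ j'', W i j'' * z j'') =
            (1 - y j) * W i j - ∑ j'', ((1 - y j) * (W i j'' * z j'')) := by
          rw [mul_sub, Finset.mul_sum]
        rw [h2, Finset.sum_congr rfl fun j'' _ => h1 j'', Finset.sum_sub_distrib]
        rw [Finset.sum_ite_eq' Finset.univ j (fun j'' => W i j'' * y j'')]
        simp only [Finset.mem_univ, if_true]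
        ring
      have hl1 : l1 (fun i => W i j - ∑ j', W i j' * y j') =
          (1 - y j) * l1 (fun i => W i j - ∑ j'', W i j'' * z j'') := by
        have := Aux.l1_smul (1 - y j) (fun i => W i j - ∑ j'', W i j'' * z j'')
        rw [abs_of_pos ht0] at this
        rw [← this]
        congr 1
        funext i
        exact hid i
      have hκle := Aux.kappa_le (W := W) j z hz0 hzj
      have hmul : (1 - y j) * kappa W ≤ (201/50)*ε := by
        calc (1 - y j) * kappa W
            ≤ (1 - y j) * l1 (fun i => W i j - ∑ j'', W i j'' * z j'') :=
              mul_le_mul_of_nonneg_left hκle ht0.le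
        _ = l1 (fun i => W i j - ∑ j', W i j' * y j') := hl1.symm
        _ ≤ (201/50)*ε := hyl
      have h2 : 1 - y j ≤ (201/50)*ε / kappa W := by
        rw [le_div_iff₀ hκpos]
        linarith
      linarith
    -- split the mass of the column between T j and its complement
    have hsum_split : ∀ f : Fin r ⊕ Fin m → ℝ,
        (∑ s ∈ T j, f s) + (∑ s ∈ Finset.univ.filter
          (fun u => ¬ (l1 (fun i0 => A i0 u - W i0 j) ≤ 2*μ)), f s) = ∑ s, f s := by
      intro f
      rw [hT]
      exact Finset.sum_filter_add_sum_filter_not _ _ f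
    set TC : Finset (Fin r ⊕ Fin m) := Finset.univ.filter
      (fun u => ¬ (l1 (fun i0 => A i0 u - W i0 j) ≤ 2*μ)) with hTC
    have hXC0 : 0 ≤ ∑ s ∈ TC, Xopt s uj := Finset.sum_nonneg fun s _ => hx0 s
    have hXT0 : 0 ≤ ∑ s ∈ T j, Xopt s uj := Finset.sum_nonneg fun s _ => hx0 s
    have hyb : y j ≤ (∑ s ∈ T j, Xopt s uj) + (1 - μ/2) * ∑ s ∈ TC, Xopt s uj := by
      have hsp := hsum_split (fun s => H j s * Xopt s uj)
      rw [hy]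
      dsimp only
      rw [← hsp]
      have hb1 : ∑ s ∈ T j, H j s * Xopt s uj ≤ ∑ s ∈ T j, Xopt s uj :=
        Finset.sum_le_sum fun s _ => mul_le_of_le_one_left (hx0 s) (hH1 j s)
      have hb2 : ∑ s ∈ TC, H j s * Xopt s uj ≤ (1 - μ/2) * ∑ s ∈ TC, Xopt s uj := by
        rw [Finset.mul_sum]
        refine Finset.sum_le_sum fun s hs => ?_
        have hns : ¬ (l1 (fun i0 => A i0 s - W i0 j) ≤ 2*μ) := by
          rw [hTC] at hs
          exact (Finset.mem_filter.mp hs).2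
        push_neg at hns
        have hHb : H j s ≤ 1 - μ/2 := by
          have := hprox j s
          linarith
        exact mul_le_mul_of_nonneg_right hHb (hx0 s)
      exact add_le_add hb1 hb2
    -- numerical conclusion
    have hxsplit : (∑ s ∈ T j, Xopt s uj) + (∑ s ∈ TC, Xopt s uj) = ∑ s, Xopt s uj := by
      exact hsum_split (fun s => Xopt s uj)
    have key1 : (μ/2) * ∑ s ∈ TC, Xopt s uj ≤ (201/50)*ε + (201/50)*ε/kappa W := by
      have hexp : (∑ s ∈ T j, Xopt s uj) + (1-μ/2) * (∑ s ∈ TC, Xopt s uj) =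
          ((∑ s ∈ T j, Xopt s uj) + (∑ s ∈ TC, Xopt s uj)) -
            (μ/2) * (∑ s ∈ TC, Xopt s uj) := by ring
      linarith [e1'.2, e4, hyb, hxsplit, hexp]
    have key2 : kappa W * μ * ∑ s ∈ TC, Xopt s uj ≤ (804/50)*ε := by
      have hfs : kappa W * ((201/50)*ε/kappa W) = (201/50)*ε := by field_simp
      nlinarith [mul_le_mul_of_nonneg_left key1 hκpos.le, hε0, hκ1]
    have hκμpos : 0 < kappa W * μ := mul_pos hκpos hμpos
    have key3 : 17*((r:ℝ)+1) * (∑ s ∈ TC, Xopt s uj) ≤ 804/50 := by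
      have key3' : (17*((r:ℝ)+1) * ∑ s ∈ TC, Xopt s uj) * (kappa W * μ)
          ≤ (804/50) * (kappa W * μ) := by
        nlinarith [key2, hεμ, hXC0, hε0, hκμpos.le]
      exact le_of_mul_le_mul_right key3' hκμpos
    have hRpos : (0:ℝ) < (r:ℝ) + 1 := by positivity
    have hRε : ((r:ℝ)+1) * ε ≤ 9/1700 := by nlinarith
    have hfinal : (201/50)*ε + (∑ s ∈ TC, Xopt s uj) ≤ 1/((r:ℝ)+1) := by
      rw [le_div_iff₀ hRpos]
      nlinarith [key3, hRε, hXC0, hε0]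
    have hXTp : (∑ s ∈ T j, Xopt s uj) ≤ ∑ s ∈ T j, p s :=
      Finset.sum_le_sum fun s _ => hxp s
    have hxlow : 1 - (201/50)*ε ≤ ∑ s, Xopt s uj := by linarith [e1'.1]
    linarith
  -- elementary facts about p and q
  have hq0 : ∀ u, 0 ≤ q u := by
    intro u
    rw [hq]
    split
    · exact le_rfl
    · exact hp0 u
  have hqp : ∀ u, q u ≤ p u := by
    intro u
    rw [hq]
    split
    · exact hp0 u
    · exact le_rfl
  have hscore_mono : ∀ S : Finset (Fin r ⊕ Fin m), scoreS S q ≤ scoreS S p :=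
    fun S => Finset.sum_le_sum fun u _ => hqp u
  -- distance from the center of a cluster
  have hcd3 : ∀ (i : Fin r ⊕ Fin m) (S : Finset (Fin r ⊕ Fin m)), S ∈ OmegaC A i →
      diamC A i S ≤ 3*μ → ∀ u ∈ S, l1 (fun k0 => A k0 i - A k0 u) ≤ 3*μ := by
    intro i S hΩ hdiam u hu
    have hseteq : {x | ∃ u ∈ S, x = cdist A i u} = (fun u => cdist A i u) '' ↑S := by
      ext x
      simp [eq_comm]
    have hbdd : BddAbove {x | ∃ u ∈ S, x = cdist A i u} := by
      rw [hseteq]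
      exact (S.finite_toSet.image _).bddAbove
    have hmem : cdist A i u ∈ {x | ∃ u ∈ S, x = cdist A i u} := ⟨u, hu, rfl⟩
    exact le_trans (le_csSup hbdd hmem) hdiam
  -- members of a small-diameter cluster are pairwise within 6μ
  have hpair6 : ∀ (i : Fin r ⊕ Fin m) (S : Finset (Fin r ⊕ Fin m)), S ∈ OmegaC A i →
      diamC A i S ≤ 3*μ → ∀ u ∈ S, ∀ v ∈ S,
      l1 (fun k0 => A k0 u - A k0 v) ≤ 6*μ := by
    intro i S hΩ hdiam u hu v hv
    have h1 := hcd3 i S hΩ hdiam u hu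
    have h2 := hcd3 i S hΩ hdiam v hv
    have htri := Aux.l1_tri (fun k0 => A k0 u) (fun k0 => A k0 i) (fun k0 => A k0 v)
    have hcomm := Aux.l1_comm (fun k0 => A k0 u) (fun k0 => A k0 i)
    linarith
  -- disjointness of balls
  have hTdisj : ∀ j j' : Fin r, j ≠ j' → Disjoint (T j) (T j') := by
    intro j j' hne
    rw [Finset.disjoint_left]
    intro u hu hu'
    have h1 := (hTmem j u).mp hu
    have h2 := (hTmem j' u).mp hu'
    have hω := h16 j j' hne
    have hωle := Aux.omega_le (W := W) j j' hne
    have htri := Aux.l1_tri (fun k0 => W k0 j) (fun k0 => A k0 u) (fun k0 => W k0 j')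
    have hcomm := Aux.l1_comm (fun k0 => W k0 j) (fun k0 => A k0 u)
    have hμnn := hμpos.le
    linarith
  have hBT : ∀ j j' : Fin r, j ≠ j' → Disjoint (B j) (T j') := by
    intro j j' hne
    rw [Finset.disjoint_left]
    intro u hu hu'
    have h1 := (hBmem j u).mp hu
    have h2 := (hTmem j' u).mp hu'
    have hω := h16 j j' hne
    have hωle := Aux.omega_le (W := W) j j' hne
    have htri := Aux.l1_tri (fun k0 => W k0 j) (fun k0 => A k0 u) (fun k0 => W k0 j')
    have hcomm := Aux.l1_comm (fun k0 => W k0 j) (fun k0 => A k0 u)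
    have hμnn := hμpos.le
    linarith
  -- mass upper bound for the 8μ balls
  have hone : ((r:ℝ)+1) * (1/((r:ℝ)+1)) = 1 := by
    field_simp
  have hBmass : ∀ j0 : Fin r, ∑ u ∈ B j0, p u ≤
      (r:ℝ) - ((r:ℝ)-1) * (1 - 1/((r:ℝ)+1)) := by
    intro j0
    set Uo : Finset (Fin r ⊕ Fin m) := (Finset.univ.erase j0).biUnion T with hUo
    have hdisjBU : Disjoint (B j0) Uo := by
      rw [Finset.disjoint_left]
      intro u hu hmem
      rcases Finset.mem_biUnion.mp hmem with ⟨j', hj', hj'mem⟩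
      have hne : j0 ≠ j' := (Finset.ne_of_mem_erase hj').symm
      exact (Finset.disjoint_left.mp (hBT j0 j' hne)) hu hj'mem
    have hUsum : ∑ u ∈ Uo, p u = ∑ j' ∈ Finset.univ.erase j0, ∑ u ∈ T j', p u := by
      rw [hUo]
      refine Finset.sum_biUnion ?_
      intro a ha b hb hab
      exact hTdisj a b hab
    have hle : ∑ u ∈ B j0 ∪ Uo, p u ≤ (r:ℝ) := by
      rw [← htot]
      exact Finset.sum_le_sum_of_subset_of_nonneg (Finset.subset_univ _)
        (fun u _ _ => hp0 u)
    rw [Finset.sum_union hdisjBU] at hle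
    have hcard : (Finset.univ.erase j0).card = r - 1 := by
      rw [Finset.card_erase_of_mem (Finset.mem_univ j0), Finset.card_univ,
        Fintype.card_fin]
    have hlow : ((r:ℝ)-1) * (1 - 1/((r:ℝ)+1)) ≤ ∑ j' ∈ Finset.univ.erase j0,
        ∑ u ∈ T j', p u := by
      calc ((r:ℝ)-1) * (1 - 1/((r:ℝ)+1))
          = ∑ _j' ∈ Finset.univ.erase j0, (1 - 1/((r:ℝ)+1)) := by
            rw [Finset.sum_const, hcard, nsmul_eq_mul]
            congr 1
            rw [Nat.cast_sub hr1, Nat.cast_one]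
      _ ≤ _ := Finset.sum_le_sum fun j' _ => hTmass j'
    rw [hUsum] at hle
    linarith
  -- main argument
  intro S
  constructor
  · rintro ⟨i, hΩ, hdiam, hscq⟩
    have hscp : (r:ℝ)/(r+1) < scoreS S p := lt_of_lt_of_le hscq (hscore_mono S)
    have hSFp : S ∈ FsetC A μ r p i := ⟨hΩ, hdiam, hscp⟩
    -- some member of S lies in a 2μ ball
    have hSU : ∃ u0 ∈ S, ∃ j0 : Fin r, u0 ∈ T j0 := by
      by_contra hcon
      push_neg at hcon
      set U : Finset (Fin r ⊕ Fin m) := Finset.univ.biUnion T with hU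
      have hdisjSU : Disjoint S U := by
        rw [Finset.disjoint_left]
        intro u hu hmem
        rcases Finset.mem_biUnion.mp hmem with ⟨j0, _, hj0⟩
        exact hcon u hu j0 hj0
      have hUsum : ∑ u ∈ U, p u = ∑ j0 : Fin r, ∑ u ∈ T j0, p u := by
        rw [hU]
        refine Finset.sum_biUnion ?_
        intro a ha b hb hab
        exact hTdisj a b hab
      have hle : ∑ u ∈ S ∪ U, p u ≤ (r:ℝ) := by
        rw [← htot]
        exact Finset.sum_le_sum_of_subset_of_nonneg (Finset.subset_univ _)
          (fun u _ _ => hp0 u)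
      rw [Finset.sum_union hdisjSU, hUsum] at hle
      have hlow : (r:ℝ) * (1 - 1/((r:ℝ)+1)) ≤ ∑ j0 : Fin r, ∑ u ∈ T j0, p u := by
        calc (r:ℝ) * (1 - 1/((r:ℝ)+1)) = ∑ _j0 : Fin r, (1 - 1/((r:ℝ)+1)) := by
              rw [Finset.sum_const, Finset.card_univ, Fintype.card_fin, nsmul_eq_mul]
        _ ≤ _ := Finset.sum_le_sum fun j0 _ => hTmass j0
      have hrq : (r:ℝ)/((r:ℝ)+1) = (r:ℝ) * (1/((r:ℝ)+1)) := by ring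
      rw [scoreS] at hscp
      rw [hrq] at hscp
      nlinarith
    obtain ⟨u0, hu0S, j0, hu0T⟩ := hSU
    have hu0T' := (hTmem j0 u0).mp hu0T
    -- every member of S is within 8μ of w_{j0}
    have hS8 : ∀ u ∈ S, l1 (fun k0 => A k0 u - W k0 j0) ≤ 8*μ := by
      intro u hu
      have h6 := hpair6 i S hΩ hdiam u hu u0 hu0S
      have htri := Aux.l1_tri (fun k0 => A k0 u) (fun k0 => A k0 u0) (fun k0 => W k0 j0)
      linarith
    refine ⟨e.symm j0, ?_, ?_⟩
    · by_contra hlt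
      push_neg at hlt
      set j' : Fin k := ⟨(e.symm j0 : ℕ), hlt⟩ with hj'
      have hcastval : (Fin.castLE hk.le j' : Fin r) = e.symm j0 := by
        apply Fin.ext
        simp [hj', Fin.castLE]
      have hcast : e (Fin.castLE hk.le j') = j0 := by
        rw [hcastval, Equiv.apply_symm_apply]
      have hScl' := hScl j'
      rw [hcast] at hScl'
      obtain ⟨⟨i', hSclF⟩, hScl8⟩ := hScl'
      have hSclscore : (r:ℝ)/(r+1) < scoreS (Scl j') p := hSclF.2.2
      have hSsubB : S ⊆ B j0 := fun u hu => (hBmem j0 u).mpr (hS8 u hu)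
      have hSclsubB : Scl j' ⊆ B j0 := fun u hu => (hBmem j0 u).mpr (hScl8 u hu)
      -- q-score of S is at most the p-mass of S \ Scl j'
      have hq_le : scoreS S q ≤ ∑ u ∈ S \ Scl j', p u := by
        have h1 : ∀ u ∈ S, q u ≤ if u ∈ Scl j' then 0 else p u := by
          intro u hu
          by_cases hc : u ∈ Scl j'
          · rw [if_pos hc, hq, if_pos ⟨j', hc⟩]
          · rw [if_neg hc]
            exact hqp u
        refine le_trans (Finset.sum_le_sum h1) ?_
        rw [Finset.sum_ite, Finset.sum_const, smul_zero, zero_add]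
        refine le_of_eq (Finset.sum_congr ?_ fun _ _ => rfl)
        rw [Finset.sdiff_eq_filter]
      have hsplit2 : (∑ u ∈ S \ Scl j', p u) + ∑ u ∈ Scl j', p u =
          ∑ u ∈ S ∪ Scl j', p u := by
        rw [← Finset.sum_union Finset.sdiff_disjoint,
          Finset.sdiff_union_self_eq_union]
      have hsub : S ∪ Scl j' ⊆ B j0 := Finset.union_subset hSsubB hSclsubB
      have hcupb : ∑ u ∈ S ∪ Scl j', p u ≤ ∑ u ∈ B j0, p u :=
        Finset.sum_le_sum_of_subset_of_nonneg hsub (fun u _ _ => hp0 u)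
      have hBb := hBmass j0
      have hrq : (r:ℝ)/((r:ℝ)+1) = (r:ℝ) * (1/((r:ℝ)+1)) := by ring
      rw [hrq] at hscq hSclscore
      rw [scoreS] at hSclscore
      have : scoreS S q ≤ (r:ℝ) - ((r:ℝ)-1) * (1 - 1/((r:ℝ)+1)) -
          ∑ u ∈ Scl j', p u := by linarith
      nlinarith [hone]
    · rw [Equiv.apply_symm_apply]
      exact ⟨⟨i, hSFp⟩, hS8⟩
  · rintro ⟨j, hkj, ⟨⟨i, hFp⟩, h8⟩⟩
    refine ⟨i, hFp.1, hFp.2.1, ?_⟩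
    have hqS : ∀ u ∈ S, q u = p u := by
      intro u hu
      rw [hq, if_neg]
      rintro ⟨j', hj'⟩
      have h1 := (hScl j').2 u hj'
      have h2 := h8 u hu
      have hne : e (Fin.castLE hk.le j') ≠ e j := by
        intro hEq
        have hinj := e.injective hEq
        have hval : ((Fin.castLE hk.le j' : Fin r) : ℕ) = (j:ℕ) :=
          congrArg Fin.val hinj
        have hj'lt : (j' : ℕ) < k := j'.isLt
        simp [Fin.castLE] at hval
        omega
      have hω := h16 _ _ hne
      have hωle := Aux.omega_le (W := W) _ _ hne
      have htri := Aux.l1_tri (fun k0 => W k0 (e (Fin.castLE hk.le j')))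
        (fun k0 => A k0 u) (fun k0 => W k0 (e j))
      have hcomm := Aux.l1_comm (fun k0 => W k0 (e (Fin.castLE hk.le j')))
        (fun k0 => A k0 u)
      linarith
    have hsame : scoreS S q = scoreS S p :=
      Finset.sum_congr rfl fun u hu => hqS u hu
    rw [hsame]
    exact hFp.2.2
end
end
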